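/- Let x_1, …, x_n be vertices in a graph G such that there are at least k parallel edges between x_i and x_{i+1} for every 1 ≤ i ≤ n-1, and let y be a vertex with at least k² neighbors among {x_1,…,x_n}. Then G contains K_k as a strong immersion. -/

import Mathlib

/-- A finite multigraph without loops: a vertex type, an edge type, and an
endpoint map assigning to each edge an unordered pair of distinct vertices. -/
structure Multigraph where
  V : Type
  E : Type
  [finV : Finite V]
  [finE : Finite E]
  ends : E → Sym2 V
  no_loops : ∀ e, ¬ (ends e).IsDiag

attribute [instance] Multigraph.finV Multigraph.finE

namespace Multigraph

variable (G : Multigraph)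

/-- The set of edges with exactly one endpoint in `X`. -/
def edgeBoundary (X : Set G.V) : Set G.E :=
  {e | ∃ u v, G.ends e = s(u, v) ∧ u ∈ X ∧ v ∉ X}

/-- The degree of a vertex: the number of edges incident with it. -/
noncomputable def degree (v : G.V) : ℕ := {e | v ∈ G.ends e}.ncard

/-- Two vertices are adjacent if some edge joins them. -/
def Adj (u v : G.V) : Prop := ∃ e, G.ends e = s(u, v)

/-- Walks in a multigraph. -/
inductive Walk : G.V → G.V → Type
  | nil (v : G.V) : Walk v v
  | cons {u v w : G.V} (e : G.E) (h : G.ends e = s(u, v)) (p : Walk v w) : Walk u w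

variable {G}

/-- The list of edges of a walk. -/
def Walk.edges : ∀ {u v : G.V}, G.Walk u v → List G.E
  | _, _, .nil _ => []
  | _, _, .cons e _ p => e :: p.edges

/-- The list of vertices of a walk, from the first to the last. -/
def Walk.support : ∀ {u v : G.V}, G.Walk u v → List G.V
  | _, v, .nil _ => [v]
  | u, _, .cons _ _ p => u :: p.support

/-- A walk is a path if it repeats no vertex. -/
def Walk.IsPath {u v : G.V} (p : G.Walk u v) : Prop := p.support.Nodup

/-- The internal vertices of a walk (all vertices except the two endpoints). -/
def Walk.internals {u v : G.V} (p : G.Walk u v) : List G.V := p.support.tail.dropLast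

/-- The walk avoids the edge set `F`. -/
def Walk.avoids {u v : G.V} (p : G.Walk u v) (F : Set G.E) : Prop := ∀ e ∈ p.edges, e ∉ F

variable (G)

/-- Any two vertices can be joined by a walk avoiding the edge set `F`. -/
def ConnectedAvoiding (F : Set G.E) : Prop :=
  ∀ u v : G.V, ∃ p : G.Walk u v, p.avoids F

/-- A multigraph is connected if any two vertices are joined by a walk. -/
def Connected : Prop := G.ConnectedAvoiding ∅

/-- A multigraph is `k`-edge-connected if it has at least two vertices and
deleting any fewer than `k` edges leaves it connected. -/
def EdgeConnected (k : ℕ) : Prop :=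
  Nontrivial G.V ∧ ∀ F : Set G.E, F.ncard < k → G.ConnectedAvoiding F

end Multigraph

open Multigraph

/-- The data of a (weak) immersion of `H` in `G`: an injection of the vertices and
pairwise edge-disjoint composite paths, one for each edge of `H`. -/
structure ImmersionData (H G : Multigraph) where
  π : H.V → G.V
  inj : Function.Injective π
  pathEnds : H.E → G.V × G.V
  path : ∀ f : H.E, G.Walk (pathEnds f).1 (pathEnds f).2
  ends_eq : ∀ f : H.E, Sym2.map π (H.ends f) = s((pathEnds f).1, (pathEnds f).2)
  isPath : ∀ f, (path f).IsPath
  edge_disj : ∀ f f', f ≠ f' → ∀ e, e ∈ (path f).edges → e ∉ (path f').edges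

/-- `G` contains `H` as a (weak) immersion. -/
def Immersion (H G : Multigraph) : Prop := Nonempty (ImmersionData H G)

/-- An immersion is strong if no branch vertex is an internal vertex of a composite path. -/
def ImmersionData.Strong {H G : Multigraph} (I : ImmersionData H G) : Prop :=
  ∀ f : H.E, ∀ v : H.V, I.π v ∉ (I.path f).internals

/-- `G` contains `H` as a strong immersion. -/
def StrongImmersion (H G : Multigraph) : Prop := ∃ I : ImmersionData H G, I.Strong

/-- `G` contains `H` as a topological minor: an immersion whose composite paths are
internally vertex-disjoint and avoid the branch vertices internally. -/
def TopologicalMinor (H G : Multigraph) : Prop :=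
  ∃ I : ImmersionData H G,
    (∀ f v, I.π v ∉ (I.path f).internals) ∧
    (∀ f f', f ≠ f' → ∀ w, w ∈ (I.path f).internals → w ∉ (I.path f').internals)

/-- The complete multigraph `K t`: one edge for every unordered pair of distinct vertices. -/
def cliqueGraph (t : ℕ) : Multigraph where
  V := Fin t
  E := {p : Sym2 (Fin t) // ¬ p.IsDiag}
  ends := Subtype.val
  no_loops := fun e => e.2

/-- The multigraph `S_{k,n}`: vertices `x_1, …, x_n` (`some i`) and `y` (`none`), with
exactly `k` parallel edges between each `x_i` and `y`. -/
def starMulti (k n : ℕ) : Multigraph where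
  V := Option (Fin n)
  E := Fin n × Fin k
  ends := fun p => s(some p.1, none)
  no_loops := fun e h => by simp [Sym2.mk_isDiag_iff] at h

/-- The multigraph `P_{k,n}`: a path on `n` vertices with each edge replaced by `k`
parallel edges. -/
def pathMulti (k n : ℕ) : Multigraph where
  V := Fin n
  E := Fin (n - 1) × Fin k
  ends := fun p => s(⟨p.1.1, by have := p.1.2; omega⟩, ⟨p.1.1 + 1, by have := p.1.2; omega⟩)
  no_loops := fun e h => by simp [Sym2.mk_isDiag_iff, Fin.ext_iff] at h

namespace Multigraph

/-- A subgraph of a multigraph, given by a set of vertices and a set of edges with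
both endpoints among those vertices. -/
structure Sub (G : Multigraph) where
  verts : Set G.V
  edgeSet : Set G.E
  closed : ∀ e ∈ edgeSet, ∀ v ∈ G.ends e, v ∈ verts

/-- `(A, B)` is a separation: `A` and `B` are edge-disjoint subgraphs whose union is `G`. -/
def IsSeparation {G : Multigraph} (A B : G.Sub) : Prop :=
  A.verts ∪ B.verts = Set.univ ∧ A.edgeSet ∪ B.edgeSet = Set.univ ∧ A.edgeSet ∩ B.edgeSet = ∅

/-- The order of a separation `(A, B)`. -/
noncomputable def sepOrder {G : Multigraph} (A B : G.Sub) : ℕ := (A.verts ∩ B.verts).ncard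

/-- `𝒯` is a tangle of order `Θ` in `G`. -/
def IsTangle (G : Multigraph) (𝒯 : Set (G.Sub × G.Sub)) (Θ : ℕ) : Prop :=
  (∀ p ∈ 𝒯, IsSeparation p.1 p.2 ∧ sepOrder p.1 p.2 < Θ) ∧
  (∀ A B : G.Sub, IsSeparation A B → sepOrder A B < Θ → (A, B) ∈ 𝒯 ∨ (B, A) ∈ 𝒯) ∧
  (∀ p₁ ∈ 𝒯, ∀ p₂ ∈ 𝒯, ∀ p₃ ∈ 𝒯,
    ¬ (p₁.1.verts ∪ p₂.1.verts ∪ p₃.1.verts = Set.univ ∧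
       p₁.1.edgeSet ∪ p₂.1.edgeSet ∪ p₃.1.edgeSet = Set.univ)) ∧
  (∀ p ∈ 𝒯, p.1.verts ≠ Set.univ)

/-- The line graph of a multigraph: vertices are the edges of `G`, with an edge of the
line graph for each unordered pair of distinct edges of `G` sharing an endpoint. -/
def lineGraph (G : Multigraph) : Multigraph where
  V := G.E
  E := {p : Sym2 G.E // ¬ p.IsDiag ∧ ∃ e f, p = s(e, f) ∧ ∃ v, v ∈ G.ends e ∧ v ∈ G.ends f}
  ends := Subtype.val
  no_loops := fun e => e.2.1

/-- `G'` (with projection `q` and new vertex `x`) is obtained from `G` by consolidating the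
vertex set `X`: delete all edges with both ends in `X` and identify `X` to the vertex `x`. -/
def IsConsolidation (G : Multigraph) (X : Set G.V) (G' : Multigraph)
    (q : G.V → G'.V) (x : G'.V) : Prop :=
  Function.Surjective q ∧ (∀ a ∈ X, q a = x) ∧ (∀ a ∉ X, q a ≠ x) ∧
  (∀ a b, a ∉ X → b ∉ X → q a = q b → a = b) ∧
  ∃ φ : {e : G.E // ∃ w ∈ G.ends e, w ∉ X} ≃ G'.E,
    ∀ e, G'.ends (φ e) = Sym2.map q (G.ends e.1)

/-- An `X`-spider of order `k` with body `v`: `k` pairwise edge-disjoint paths from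
`v ∉ X` to `X`, none of them having an internal vertex in `X`. -/
def HasSpiderWithBody (G : Multigraph) (X : Set G.V) (k : ℕ) (v : G.V) : Prop :=
  v ∉ X ∧ ∃ (tgt : Fin k → G.V) (P : ∀ i, G.Walk v (tgt i)),
    (∀ i, tgt i ∈ X) ∧ (∀ i, (P i).IsPath) ∧
    (∀ i, ∀ w ∈ (P i).internals, w ∉ X) ∧
    (∀ i j, i ≠ j → ∀ e ∈ (P i).edges, e ∉ (P j).edges)

/-- `G` contains an `X`-spider of order `k`. -/
def HasXSpider (G : Multigraph) (X : Set G.V) (k : ℕ) : Prop :=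
  ∃ v, HasSpiderWithBody G X k v

/-- A model of the complete graph `K t` in `G`: `t` pairwise disjoint nonempty connected
branch sets with an edge of `G` between any two of them. -/
def IsCliqueModel (G : Multigraph) (t : ℕ) (X : Fin t → Set G.V) : Prop :=
  (∀ i, (X i).Nonempty) ∧
  (∀ i j, i ≠ j → Disjoint (X i) (X j)) ∧
  (∀ i, ∀ u ∈ X i, ∀ v ∈ X i, ∃ p : G.Walk u v, ∀ w ∈ p.support, w ∈ X i) ∧
  (∀ i j, i ≠ j → ∃ e, ∃ a ∈ X i, ∃ b ∈ X j, G.ends e = s(a, b))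

/-- The canonical separation `(A, B)` of the line graph of `G` associated to a vertex
set `U ⊆ V(G)`. -/
def IsCanonicalSeparation (G : Multigraph) (U : Set G.V) (A B : G.lineGraph.Sub) : Prop :=
  A.verts = {e : G.E | ∃ w ∈ G.ends e, w ∈ U} ∧
  A.edgeSet = {p : G.lineGraph.E | ∀ q ∈ G.lineGraph.ends p, ∃ w ∈ G.ends q, w ∈ U} ∧
  B.verts = {e : G.E | ∃ w ∈ G.ends e, w ∉ U} ∧
  B.edgeSet = {p : G.lineGraph.E | (∀ q ∈ G.lineGraph.ends p, ∃ w ∈ G.ends q, w ∉ U) ∧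
    ¬ (∀ q ∈ G.lineGraph.ends p, q ∈ G.edgeBoundary U)}

/-- A `k`-star with center `u`: a set of `k` edges all incident with `u`. -/
def IsKStarWithCenter (G : Multigraph) (F : Set G.E) (k : ℕ) (u : G.V) : Prop :=
  F.ncard = k ∧ ∀ e ∈ F, u ∈ G.ends e

/-- A set `F` of vertices of the line graph of `G` is free with respect to a tangle `𝒯`
in the line graph if no separation in `𝒯` of order less than `|F|` has `F` on its small side. -/
def FreeInTangle (G : Multigraph) (𝒯 : Set (G.lineGraph.Sub × G.lineGraph.Sub))
    (F : Set G.E) : Prop :=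
  ¬ ∃ p ∈ 𝒯, sepOrder p.1 p.2 < F.ncard ∧ F ⊆ p.1.verts

end Multigraph
section AuxImmersion

namespace Multigraph

variable {G : Multigraph}

lemma Walk.support_eq_cons {u v : G.V} (p : G.Walk u v) :
    p.support = u :: p.support.tail := by
  cases p <;> rfl

def Walk.append : ∀ {u v w : G.V}, G.Walk u v → G.Walk v w → G.Walk u w
  | _, _, _, .nil _, q => q
  | _, _, _, .cons e h p, q => .cons e h (p.append q)

@[simp] lemma Walk.edges_append : ∀ {u v w : G.V} (p : G.Walk u v) (q : G.Walk v w),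
    (p.append q).edges = p.edges ++ q.edges
  | _, _, _, .nil _, q => rfl
  | _, _, _, .cons e h p, q => by
      simp [Walk.append, Walk.edges, Walk.edges_append p q]

@[simp] lemma Walk.support_append : ∀ {u v w : G.V} (p : G.Walk u v) (q : G.Walk v w),
    (p.append q).support = p.support ++ q.support.tail
  | _, _, _, .nil v, q => (q.support_eq_cons).symm ▸ rfl
  | _, _, _, .cons e h p, q => by
      simp only [Walk.append, Walk.support, Walk.support_append p q, List.cons_append]

/-- Walk along consecutive vertices `X p, X (p+1), …, X q` using edges `ep r`. -/
def seg (X : ℕ → G.V) (ep : ℕ → G.E) :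
    ∀ (p q : ℕ), p ≤ q →
      (∀ r, p ≤ r → r < q → G.ends (ep r) = s(X r, X (r + 1))) → G.Walk (X p) (X q)
  | p, q, hpq, h =>
    if hq : p = q then hq ▸ Walk.nil (X p)
    else
      Walk.cons (ep p) (h p le_rfl (by omega))
        (seg X ep (p + 1) q (by omega) (fun r h1 h2 => h r (by omega) h2))
  termination_by p q => q - p

lemma seg_edges (X : ℕ → G.V) (ep : ℕ → G.E) :
    ∀ (p q : ℕ) (hpq : p ≤ q) h, (seg X ep p q hpq h).edges = (List.range' p (q - p)).map ep
  | p, q, hpq, h => by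
    rw [seg]
    split
    · subst ‹p = q›; simp [Walk.edges]
    · rw [Walk.edges, seg_edges X ep (p+1) q (by omega)]
      have h1 : q - p = (q - (p+1)) + 1 := by omega
      rw [h1, List.range'_succ]
      simp
  termination_by p q => q - p

lemma seg_support (X : ℕ → G.V) (ep : ℕ → G.E) :
    ∀ (p q : ℕ) (hpq : p ≤ q) h,
      (seg X ep p q hpq h).support = (List.range' p (q - p + 1)).map X
  | p, q, hpq, h => by
    rw [seg]
    split
    · subst ‹p = q›; simp [Walk.support]
    · rw [Walk.support, seg_support X ep (p+1) q (by omega)]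
      have h1 : q - p + 1 = (q - (p+1) + 1) + 1 := by omega
      rw [h1, List.range'_succ, List.map_cons, List.range'_succ, List.map_cons]
      rfl
  termination_by p q => q - p

end Multigraph

lemma List.mem_range'' {m s n : ℕ} : m ∈ List.range' s n ↔ s ≤ m ∧ m < s + n := by
  rw [List.mem_range']
  constructor
  · rintro ⟨i, hi, rfl⟩; omega
  · rintro ⟨h1, h2⟩; exact ⟨m - s, by omega, by omega⟩

lemma List.dropLast_range' (s n : ℕ) : (List.range' s (n+1)).dropLast = List.range' s n := by
  induction n generalizing s with
  | zero => simp
  | succ n ih =>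
    rw [List.range'_succ (s := s) (n := n+1), List.range'_succ (s := s) (n := n)]
    rw [List.dropLast_cons_of_ne_nil (by simp [List.range'_succ]), ih]

end AuxImmersion
namespace Multigraph

variable {G : Multigraph}

/-- The composite path of the `K_k` immersion joining the branch vertices of
blocks `a < b`: go up block `a` to the connector, jump to `y`, jump back to the
connector of block `b`, go up block `b` to its branch vertex. -/
def coreWalk (X : ℕ → G.V) (pe : ℕ → ℕ → G.E) (ye : ℕ → ℕ → G.E) (B : ℕ → ℕ → ℕ)
    (k a b : ℕ) (y : G.V)
    (hle1 : B a (min a (k-2)) ≤ B a (if b = k-1 then a else b))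
    (hseg1 : ∀ r, B a (min a (k-2)) ≤ r → r < B a (if b = k-1 then a else b) →
      G.ends (pe r b) = s(X r, X (r + 1)))
    (hy1 : G.ends (ye a (if b = k-1 then a else b)) = s(X (B a (if b = k-1 then a else b)), y))
    (hy2 : G.ends (ye b a) = s(y, X (B b a)))
    (hle2 : B b a ≤ B b (min b (k-2)))
    (hseg2 : ∀ r, B b a ≤ r → r < B b (min b (k-2)) → G.ends (pe r a) = s(X r, X (r + 1))) :
    G.Walk (X (B a (min a (k-2)))) (X (B b (min b (k-2)))) :=
  (seg X (fun r => pe r b) (B a (min a (k-2))) (B a (if b = k-1 then a else b)) hle1 hseg1).append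
    (Walk.cons (ye a (if b = k-1 then a else b)) hy1
      (Walk.cons (ye b a) hy2
        (seg X (fun r => pe r a) (B b a) (B b (min b (k-2))) hle2 hseg2)))

lemma coreWalk_edges (X : ℕ → G.V) (pe : ℕ → ℕ → G.E) (ye : ℕ → ℕ → G.E) (B : ℕ → ℕ → ℕ)
    (k a b : ℕ) (y : G.V) (hle1) (hseg1) (hy1) (hy2) (hle2) (hseg2) :
    (coreWalk X pe ye B k a b y hle1 hseg1 hy1 hy2 hle2 hseg2).edges =
      (List.range' (B a (min a (k-2)))
          (B a (if b = k-1 then a else b) - B a (min a (k-2)))).map (fun r => pe r b)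
        ++ ye a (if b = k-1 then a else b) :: ye b a ::
          (List.range' (B b a) (B b (min b (k-2)) - B b a)).map (fun r => pe r a) := by
  simp [coreWalk, Walk.edges, seg_edges]

lemma coreWalk_support (X : ℕ → G.V) (pe : ℕ → ℕ → G.E) (ye : ℕ → ℕ → G.E) (B : ℕ → ℕ → ℕ)
    (k a b : ℕ) (y : G.V) (hle1) (hseg1) (hy1) (hy2) (hle2) (hseg2) :
    (coreWalk X pe ye B k a b y hle1 hseg1 hy1 hy2 hle2 hseg2).support =
      (List.range' (B a (min a (k-2)))
          (B a (if b = k-1 then a else b) - B a (min a (k-2)) + 1)).map X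
        ++ y :: (List.range' (B b a) (B b (min b (k-2)) - B b a + 1)).map X := by
  simp [coreWalk, Walk.support, seg_support]

end Multigraph
/-- Sort an unordered pair of `Fin k`. -/
def spair {k : ℕ} : Sym2 (Fin k) → Fin k × Fin k :=
  Sym2.lift ⟨fun u v => (min u v, max u v), fun u v => by simp [min_comm, max_comm]⟩

lemma spair_mk {k : ℕ} (u v : Fin k) : spair s(u, v) = (min u v, max u v) := rfl

lemma mk_spair {k : ℕ} (z : Sym2 (Fin k)) : s((spair z).1, (spair z).2) = z := by
  induction z using Sym2.inductionOn with
  | hf u v =>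
    rw [spair_mk]
    rcases le_total u v with h | h
    · simp [min_eq_left h, max_eq_right h]
    · simp only [min_eq_right h, max_eq_left h]
      exact Sym2.eq_swap

lemma spair_le {k : ℕ} (z : Sym2 (Fin k)) : (spair z).1 ≤ (spair z).2 := by
  induction z using Sym2.inductionOn with
  | hf u v => rw [spair_mk]; exact min_le_max

theorem core_immersion (G : Multigraph) (k n : ℕ) (hk : 2 ≤ k)
    (X : ℕ → G.V) (y : G.V)
    (hXinj : ∀ m m', m < n → m' < n → X m = X m' → m = m')
    (B : ℕ → ℕ → ℕ)
    (hBn : ∀ a c, a < k → c ≤ k-2 → B a c < n)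
    (hB1 : ∀ a c c', a < k → c < c' → c' ≤ k-2 → B a c < B a c')
    (hB2 : ∀ a a', a < a' → a' < k → B a (k-2) < B a' 0)
    (havoid : ∀ a, a < k → ∀ m, m < n → X m = y → m < B a 0 ∨ B a (k-2) < m)
    (pe : ℕ → ℕ → G.E)
    (hpe : ∀ p, p + 1 < n → ∀ t, t < k → G.ends (pe p t) = s(X p, X (p+1)))
    (hpeinj : ∀ p, p + 1 < n → ∀ t t', t < k → t' < k → pe p t = pe p t' → t = t')
    (ye : ℕ → ℕ → G.E)
    (hye : ∀ a c, a < k → c ≤ k-2 → G.ends (ye a c) = s(y, X (B a c))) :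
    StrongImmersion (cliqueGraph k) G := by
  classical
  have hBle : ∀ a c c', a < k → c ≤ c' → c' ≤ k-2 → B a c ≤ B a c' := by
    intro a c c' ha hcc hc'
    rcases Nat.lt_or_ge c c' with h | h
    · exact (hB1 a c c' ha h hc').le
    · have : c = c' := by omega
      simp [this]
  have hyne : ∀ a c, a < k → c ≤ k-2 → X (B a c) ≠ y := by
    intro a c ha hc h
    have h1 := havoid a ha (B a c) (hBn a c ha hc) h
    have h2 := hBle a 0 c ha (Nat.zero_le _) hc
    have h3 := hBle a c (k-2) ha hc le_rfl
    omega
  have hblock : ∀ a a' r, a < k → a' < k → B a 0 ≤ r → r ≤ B a (k-2) →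
      B a' 0 ≤ r → r ≤ B a' (k-2) → a = a' := by
    intro a a' r ha ha' h1 h2 h3 h4
    rcases lt_trichotomy a a' with h | h | h
    · have := hB2 a a' h ha'; omega
    · exact h
    · have := hB2 a' a h ha; omega
  have hBinj : ∀ a c a' c', a < k → c ≤ k-2 → a' < k → c' ≤ k-2 →
      B a c = B a' c' → a = a' ∧ c = c' := by
    intro a c a' c' ha hc ha' hc' h
    have h1 := hBle a 0 c ha (Nat.zero_le _) hc
    have h2 := hBle a c (k-2) ha hc le_rfl
    have h3 := hBle a' 0 c' ha' (Nat.zero_le _) hc'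
    have h4 := hBle a' c' (k-2) ha' hc' le_rfl
    have haa : a = a' := hblock a a' (B a c) ha ha' h1 h2 (by omega) (by omega)
    subst haa
    refine ⟨rfl, ?_⟩
    rcases lt_trichotomy c c' with h5 | h5 | h5
    · have := hB1 a c c' ha h5 hc'; omega
    · exact h5
    · have := hB1 a c' c ha h5 hc; omega
  -- uniqueness of `pe` edges
  have pe_inj : ∀ r t r' t', r + 1 < n → r' + 1 < n → t < k → t' < k →
      pe r t = pe r' t' → r = r' ∧ t = t' := by
    intro r t r' t' hr hr' ht ht' h
    have he : s(X r, X (r+1)) = s(X r', X (r'+1)) := by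
      rw [← hpe r hr t ht, ← hpe r' hr' t' ht', h]
    rw [Sym2.eq_iff] at he
    have hrr : r = r' := by
      rcases he with ⟨h1, h2⟩ | ⟨h1, h2⟩
      · exact hXinj r r' (by omega) (by omega) h1
      · have e1 := hXinj r (r'+1) (by omega) hr' h1
        have e2 := hXinj (r+1) r' hr (by omega) h2
        omega
    subst hrr
    exact ⟨rfl, hpeinj r hr t t' ht ht' h⟩
  have ye_inj : ∀ c d c' d', c < k → d ≤ k-2 → c' < k → d' ≤ k-2 →
      ye c d = ye c' d' → c = c' ∧ d = d' := by
    intro c d c' d' hc hd hc' hd' h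
    have he : s(y, X (B c d)) = s(y, X (B c' d')) := by
      rw [← hye c d hc hd, ← hye c' d' hc' hd', h]
    rw [Sym2.eq_iff] at he
    rcases he with ⟨-, h2⟩ | ⟨h1, h2⟩
    · exact hBinj c d c' d' hc hd hc' hd'
        (hXinj _ _ (hBn c d hc hd) (hBn c' d' hc' hd') h2)
    · exact absurd h1.symm (hyne c' d' hc' hd')
  have pe_ne_ye : ∀ r t c d blk, t < k → blk < k → B blk 0 ≤ r → r + 1 ≤ B blk (k-2) →
      c < k → d ≤ k-2 → pe r t ≠ ye c d := by
    intro r t c d blk ht hblk h1 h2 hc hd h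
    have hrn : r + 1 < n := by have := hBn blk (k-2) hblk le_rfl; omega
    have he : s(X r, X (r+1)) = s(y, X (B c d)) := by
      rw [← hpe r hrn t ht, ← hye c d hc hd, h]
    rw [Sym2.eq_iff] at he
    rcases he with ⟨h3, -⟩ | ⟨-, h4⟩
    · have := havoid blk hblk r (by omega) h3
      omega
    · have := havoid blk hblk (r+1) (by omega) h4
      omega
  -- the composite paths
  have KEY : ∀ a b : ℕ, a < b → b < k →
      ∃ W : G.Walk (X (B a (min a (k-2)))) (X (B b (min b (k-2)))),
        W.support = (List.range' (B a (min a (k-2)))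
            (B a (if b = k-1 then a else b) - B a (min a (k-2)) + 1)).map X
          ++ y :: (List.range' (B b a) (B b (min b (k-2)) - B b a + 1)).map X ∧
        W.edges = (List.range' (B a (min a (k-2)))
            (B a (if b = k-1 then a else b) - B a (min a (k-2)))).map (fun r => pe r b)
          ++ ye a (if b = k-1 then a else b) :: ye b a ::
            (List.range' (B b a) (B b (min b (k-2)) - B b a)).map (fun r => pe r a) := by
    intro a b hab hbk
    have hak : a ≤ k - 2 := by omega
    have hmina : min a (k-2) = a := by omega
    have hg : (if b = k-1 then a else b) ≤ k - 2 := by split <;> omega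
    have hminb : min b (k-2) ≤ k - 2 := by omega
    have haminb : a ≤ min b (k-2) := by omega
    have hle1 : B a (min a (k-2)) ≤ B a (if b = k-1 then a else b) := by
      rw [hmina]
      exact hBle a a _ (by omega) (by split <;> omega) hg
    have hle2 : B b a ≤ B b (min b (k-2)) := hBle b a _ (by omega) haminb hminb
    have hseg1 : ∀ r, B a (min a (k-2)) ≤ r → r < B a (if b = k-1 then a else b) →
        G.ends (pe r b) = s(X r, X (r + 1)) := by
      intro r h1 h2
      have : B a (if b = k-1 then a else b) < n := hBn a _ (by omega) hg
      exact hpe r (by omega) b hbk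
    have hseg2 : ∀ r, B b a ≤ r → r < B b (min b (k-2)) →
        G.ends (pe r a) = s(X r, X (r + 1)) := by
      intro r h1 h2
      have : B b (min b (k-2)) < n := hBn b _ (by omega) hminb
      exact hpe r (by omega) a (by omega)
    have hy1 : G.ends (ye a (if b = k-1 then a else b))
        = s(X (B a (if b = k-1 then a else b)), y) :=
      (hye a _ (by omega) hg).trans Sym2.eq_swap
    have hy2 : G.ends (ye b a) = s(y, X (B b a)) := hye b a (by omega) hak
    exact ⟨Multigraph.coreWalk X pe ye B k a b y hle1 hseg1 hy1 hy2 hle2 hseg2,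
      Multigraph.coreWalk_support X pe ye B k a b y hle1 hseg1 hy1 hy2 hle2 hseg2,
      Multigraph.coreWalk_edges X pe ye B k a b y hle1 hseg1 hy1 hy2 hle2 hseg2⟩
  have hBn' : ∀ a c, a < k → c ≤ k-2 → B a c < n := hBn
  have LDROP : ∀ (A : List G.V) (p d : ℕ),
      (A ++ y :: (List.range' p (d+1)).map X).dropLast = A ++ y :: (List.range' p d).map X := by
    intro A p d
    rw [List.range'_concat, List.map_append]
    simp only [one_mul, List.map_cons, List.map_nil]
    rw [show A ++ y :: ((List.range' p d).map X ++ [X (p+d)])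
        = (A ++ y :: (List.range' p d).map X) ++ [X (p+d)] by simp]
    exact List.dropLast_concat
  have NODUP : ∀ a b : ℕ, a < b → b < k →
      ((List.range' (B a (min a (k-2)))
          (B a (if b = k-1 then a else b) - B a (min a (k-2)) + 1)).map X
        ++ y :: (List.range' (B b a) (B b (min b (k-2)) - B b a + 1)).map X).Nodup := by
    intro a b hab hbk
    have hak : a ≤ k-2 := by omega
    have hmina : min a (k-2) = a := by omega
    have hg : (if b = k-1 then a else b) ≤ k-2 := by split <;> omega
    have hminb : min b (k-2) ≤ k-2 := by omega
    have hle1 : B a (min a (k-2)) ≤ B a (if b = k-1 then a else b) := by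
      rw [hmina]; exact hBle a a _ (by omega) (by split <;> omega) hg
    have hle2 : B b a ≤ B b (min b (k-2)) := hBle b a _ (by omega) (by omega) hminb
    have hm1 : ∀ m ∈ List.range' (B a (min a (k-2)))
        (B a (if b = k-1 then a else b) - B a (min a (k-2)) + 1),
        B a 0 ≤ m ∧ m ≤ B a (k-2) ∧ m < n := by
      intro m hm
      rw [List.mem_range''] at hm
      have l0 := hBle a 0 (min a (k-2)) (by omega) (by omega) (by omega)
      have l1 := hBle a _ (k-2) (by omega) hg le_rfl
      have l2 := hBn a (k-2) (by omega) le_rfl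
      omega
    have hm2 : ∀ m ∈ List.range' (B b a) (B b (min b (k-2)) - B b a + 1),
        B b 0 ≤ m ∧ m ≤ B b (k-2) ∧ m < n := by
      intro m hm
      rw [List.mem_range''] at hm
      have l0 := hBle b 0 a (by omega) (by omega) hak
      have l1 := hBle b _ (k-2) (by omega) hminb le_rfl
      have l2 := hBn b (k-2) (by omega) le_rfl
      omega
    rw [List.nodup_append]
    refine ⟨?_, ?_, ?_⟩
    · exact (List.nodup_range' (step := 1) one_pos).map_on (fun m hm m' hm' h =>
        hXinj m m' (hm1 m hm).2.2 (hm1 m' hm').2.2 h)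
    · rw [List.nodup_cons]
      constructor
      · intro hy
        rw [List.mem_map] at hy
        obtain ⟨m, hm, hXm⟩ := hy
        have h1 := hm2 m hm
        have := havoid b (by omega) m h1.2.2 hXm
        omega
      · exact (List.nodup_range' (step := 1) one_pos).map_on (fun m hm m' hm' h =>
          hXinj m m' (hm2 m hm).2.2 (hm2 m' hm').2.2 h)
    · intro z hz z' hz' hzz; subst hzz
      rw [List.mem_map] at hz
      obtain ⟨m, hm, rfl⟩ := hz
      have h1 := hm1 m hm
      rcases List.mem_cons.1 hz' with h | h
      · have := havoid a (by omega) m h1.2.2 h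
        omega
      · rw [List.mem_map] at h
        obtain ⟨m', hm', hmm⟩ := h
        have h2 := hm2 m' hm'
        have := hXinj m' m h2.2.2 h1.2.2 hmm
        have := hB2 a b hab hbk
        omega
  have INT : ∀ a b : ℕ, a < b → b < k → ∀ v : Fin k,
      X (B (v:ℕ) (min (v:ℕ) (k-2))) ∉
        (((List.range' (B a (min a (k-2)))
            (B a (if b = k-1 then a else b) - B a (min a (k-2)) + 1)).map X
          ++ y :: (List.range' (B b a)
            (B b (min b (k-2)) - B b a + 1)).map X).tail.dropLast) := by
    intro a b hab hbk v hmem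
    have hak : a ≤ k-2 := by omega
    have hmina : min a (k-2) = a := by omega
    have hg : (if b = k-1 then a else b) ≤ k-2 := by split <;> omega
    have hminb : min b (k-2) ≤ k-2 := by omega
    have hle1 : B a (min a (k-2)) ≤ B a (if b = k-1 then a else b) := by
      rw [hmina]; exact hBle a a _ (by omega) (by split <;> omega) hg
    have hle2 : B b a ≤ B b (min b (k-2)) := hBle b a _ (by omega) (by omega) hminb
    have hvk : (v:ℕ) < k := v.isLt
    have hminv : min (v:ℕ) (k-2) ≤ k-2 := by omega
    rw [List.range'_succ, List.map_cons, List.cons_append, List.tail_cons, LDROP] at hmem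
    have hvb := hBn v (min (v:ℕ) (k-2)) hvk hminv
    have hv0 := hBle (v:ℕ) 0 (min (v:ℕ) (k-2)) hvk (by omega) hminv
    have hv2 := hBle (v:ℕ) (min (v:ℕ) (k-2)) (k-2) hvk hminv le_rfl
    rcases List.mem_append.1 hmem with h | h
    · rw [List.mem_map] at h
      obtain ⟨m, hm, hXm⟩ := h
      rw [List.mem_range''] at hm
      have l0 := hBle a 0 (min a (k-2)) (by omega) (by omega) (by omega)
      have l1 := hBle a _ (k-2) (by omega) hg le_rfl
      have hmn : m < n := by have := hBn a (k-2) (by omega) le_rfl; omega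
      have hme : m = B (v:ℕ) (min (v:ℕ) (k-2)) := hXinj m _ hmn hvb hXm
      have hva : (v:ℕ) = a :=
        hblock (v:ℕ) a m hvk (by omega) (by omega) (by omega) (by omega) (by omega)
      rw [hva] at hme
      rw [hmina] at hm hme
      omega
    · rcases List.mem_cons.1 h with h | h
      · exact hyne (v:ℕ) _ hvk hminv h
      · rw [List.mem_map] at h
        obtain ⟨m, hm, hXm⟩ := h
        rw [List.mem_range''] at hm
        have l0 := hBle b 0 a (by omega) (by omega) hak
        have l1 := hBle b _ (k-2) (by omega) hminb le_rfl
        have hmn : m < n := by have := hBn b (k-2) (by omega) le_rfl; omega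
        have hme : m = B (v:ℕ) (min (v:ℕ) (k-2)) := hXinj m _ hmn hvb hXm
        have hvbb : (v:ℕ) = b :=
          hblock (v:ℕ) b m hvk (by omega) (by omega) (by omega) (by omega) (by omega)
        rw [hvbb] at hme
        omega
  have IDEN : ∀ a b : ℕ, a < b → b < k → ∀ e : G.E,
      e ∈ (List.range' (B a (min a (k-2)))
            (B a (if b = k-1 then a else b) - B a (min a (k-2)))).map (fun r => pe r b)
          ++ ye a (if b = k-1 then a else b) :: ye b a ::
            (List.range' (B b a) (B b (min b (k-2)) - B b a)).map (fun r => pe r a) →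
      (∃ r t c, t < k ∧ c < k ∧ B c 0 ≤ r ∧ r + 1 ≤ B c (k-2) ∧ e = pe r t ∧
        ((c = a ∧ t = b) ∨ (c = b ∧ t = a)))
      ∨ (∃ c d, c < k ∧ d ≤ k-2 ∧ e = ye c d ∧
        ((d = c ∧ a = c ∧ b = k-1) ∨ (c = a ∧ d = b) ∨ (c = b ∧ d = a))) := by
    intro a b hab hbk e he
    have hak : a ≤ k-2 := by omega
    have hmina : min a (k-2) = a := by omega
    have hg : (if b = k-1 then a else b) ≤ k-2 := by split <;> omega
    have hminb : min b (k-2) ≤ k-2 := by omega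
    have hle1 : B a (min a (k-2)) ≤ B a (if b = k-1 then a else b) := by
      rw [hmina]; exact hBle a a _ (by omega) (by split <;> omega) hg
    have hle2 : B b a ≤ B b (min b (k-2)) := hBle b a _ (by omega) (by omega) hminb
    rcases List.mem_append.1 he with h | h
    · rw [List.mem_map] at h
      obtain ⟨r, hr, rfl⟩ := h
      rw [List.mem_range''] at hr
      have l0 := hBle a 0 (min a (k-2)) (by omega) (by omega) (by omega)
      have l1 := hBle a _ (k-2) (by omega) hg le_rfl
      exact Or.inl ⟨r, b, a, hbk, by omega, by omega, by omega, rfl, Or.inl ⟨rfl, rfl⟩⟩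
    · rcases List.mem_cons.1 h with h | h
      · refine Or.inr ⟨a, if b = k-1 then a else b, by omega, hg, h, ?_⟩
        by_cases hb1 : b = k-1
        · rw [if_pos hb1]; exact Or.inl ⟨rfl, rfl, hb1⟩
        · rw [if_neg hb1]; exact Or.inr (Or.inl ⟨rfl, rfl⟩)
      · rcases List.mem_cons.1 h with h | h
        · exact Or.inr ⟨b, a, by omega, hak, h, Or.inr (Or.inr ⟨rfl, rfl⟩)⟩
        · rw [List.mem_map] at h
          obtain ⟨r, hr, rfl⟩ := h
          rw [List.mem_range''] at hr
          have l0 := hBle b 0 a (by omega) (by omega) hak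
          have l1 := hBle b _ (k-2) (by omega) hminb le_rfl
          exact Or.inl ⟨r, a, b, by omega, hbk, by omega, by omega, rfl,
            Or.inr ⟨rfl, rfl⟩⟩
  -- sorted endpoints of an edge of the clique
  have hAB : ∀ f : (cliqueGraph k).E, ((spair f.1).1 : ℕ) < ((spair f.1).2 : ℕ) := by
    intro f
    have h1 : (spair f.1).1 ≤ (spair f.1).2 := spair_le f.1
    rcases lt_or_eq_of_le h1 with h | h
    · exact h
    · exfalso
      apply f.2
      rw [← mk_spair f.1, h, Sym2.mk_isDiag_iff]
  have pathd : ∀ f : (cliqueGraph k).E,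
      ∃ W : G.Walk (X (B ((spair f.1).1 : ℕ) (min ((spair f.1).1 : ℕ) (k-2))))
        (X (B ((spair f.1).2 : ℕ) (min ((spair f.1).2 : ℕ) (k-2)))),
        W.support = (List.range' (B ((spair f.1).1 : ℕ) (min ((spair f.1).1 : ℕ) (k-2)))
            (B ((spair f.1).1 : ℕ) (if ((spair f.1).2 : ℕ) = k-1 then ((spair f.1).1 : ℕ)
              else ((spair f.1).2 : ℕ)) - B ((spair f.1).1 : ℕ) (min ((spair f.1).1 : ℕ) (k-2))
                + 1)).map X
          ++ y :: (List.range' (B ((spair f.1).2 : ℕ) ((spair f.1).1 : ℕ))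
            (B ((spair f.1).2 : ℕ) (min ((spair f.1).2 : ℕ) (k-2))
              - B ((spair f.1).2 : ℕ) ((spair f.1).1 : ℕ) + 1)).map X ∧
        W.edges = (List.range' (B ((spair f.1).1 : ℕ) (min ((spair f.1).1 : ℕ) (k-2)))
            (B ((spair f.1).1 : ℕ) (if ((spair f.1).2 : ℕ) = k-1 then ((spair f.1).1 : ℕ)
              else ((spair f.1).2 : ℕ))
              - B ((spair f.1).1 : ℕ) (min ((spair f.1).1 : ℕ) (k-2)))).map
                (fun r => pe r ((spair f.1).2 : ℕ))
          ++ ye ((spair f.1).1 : ℕ) (if ((spair f.1).2 : ℕ) = k-1 then ((spair f.1).1 : ℕ)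
              else ((spair f.1).2 : ℕ)) :: ye ((spair f.1).2 : ℕ) ((spair f.1).1 : ℕ) ::
            (List.range' (B ((spair f.1).2 : ℕ) ((spair f.1).1 : ℕ))
              (B ((spair f.1).2 : ℕ) (min ((spair f.1).2 : ℕ) (k-2))
                - B ((spair f.1).2 : ℕ) ((spair f.1).1 : ℕ))).map
                  (fun r => pe r ((spair f.1).1 : ℕ)) :=
    fun f => KEY _ _ (hAB f) (spair f.1).2.isLt
  refine ⟨⟨fun v => X (B (Fin.val v) (min (Fin.val v) (k-2))), ?_,
    fun f => (X (B ((spair f.1).1 : ℕ) (min ((spair f.1).1 : ℕ) (k-2))),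
      X (B ((spair f.1).2 : ℕ) (min ((spair f.1).2 : ℕ) (k-2)))),
    fun f => (pathd f).choose, ?_, ?_, ?_⟩, ?_⟩
  · -- injectivity of π
    exact fun (v v' : Fin k) h => Fin.ext
      (hBinj (v:ℕ) (min (v:ℕ) (k-2)) (v':ℕ) (min (v':ℕ) (k-2)) v.isLt (by omega) v'.isLt
        (by omega)
        (hXinj _ _ (hBn _ _ v.isLt (by omega)) (hBn _ _ v'.isLt (by omega)) h)).1
  · -- ends_eq
    intro f
    conv_lhs => rw [show (cliqueGraph k).ends f = f.1 from rfl, ← mk_spair f.1]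
    rfl
  · -- isPath
    intro f
    have spec := (pathd f).choose_spec
    have hnd := NODUP ((spair f.1).1 : ℕ) ((spair f.1).2 : ℕ) (hAB f) (spair f.1).2.isLt
    rw [← spec.1] at hnd
    exact hnd
  · -- edge-disjointness
    intro f f' hne e he he'
    have spec := (pathd f).choose_spec
    have spec' := (pathd f').choose_spec
    rw [spec.2] at he
    rw [spec'.2] at he'
    have hab := hAB f
    have hab' := hAB f'
    have hbk : ((spair f.1).2 : ℕ) < k := (spair f.1).2.isLt
    have hbk' : ((spair f'.1).2 : ℕ) < k := (spair f'.1).2.isLt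
    have hpairs : ¬(((spair f.1).1 : ℕ) = ((spair f'.1).1 : ℕ)
        ∧ ((spair f.1).2 : ℕ) = ((spair f'.1).2 : ℕ)) := by
      rintro ⟨h1, h2⟩
      apply hne
      apply Subtype.ext
      rw [← mk_spair f.1, ← mk_spair f'.1, Fin.ext h1, Fin.ext h2]
    rcases IDEN _ _ hab hbk e he with ⟨r, t, c, ht, hc, h1, h2, rfl, hcase⟩ |
        ⟨c, d, hc, hd, rfl, hcase⟩
    · rcases IDEN _ _ hab' hbk' _ he' with ⟨r', t', c', ht', hc', h1', h2', heq, hcase'⟩ |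
          ⟨c', d', hc', hd', heq, hcase'⟩
      · have hrn : r + 1 < n := by have := hBn c (k-2) hc le_rfl; omega
        have hrn' : r' + 1 < n := by have := hBn c' (k-2) hc' le_rfl; omega
        obtain ⟨hrr, htt⟩ := pe_inj r t r' t' hrn hrn' ht ht' heq
        subst hrr
        have hcc : c = c' := hblock c c' r hc hc' h1 (by omega) h1' (by omega)
        omega
      · exact pe_ne_ye r t c' d' c ht hc h1 h2 hc' hd' heq
    · rcases IDEN _ _ hab' hbk' _ he' with ⟨r', t', c', ht', hc', h1', h2', heq, hcase'⟩ |
          ⟨c', d', hc', hd', heq, hcase'⟩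
      · exact pe_ne_ye r' t' c d c' ht' hc' h1' h2' hc hd heq.symm
      · obtain ⟨hcc, hdd⟩ := ye_inj c d c' d' hc hd hc' hd' heq
        omega
  · -- strongness
    intro f v
    have spec := (pathd f).choose_spec
    have h := INT ((spair f.1).1 : ℕ) ((spair f.1).2 : ℕ) (hAB f) (spair f.1).2.isLt v
    rw [← spec.1] at h
    exact h

lemma exists_inj_of_ncard {α : Type} [Finite α] (S : Set α) (k : ℕ) (h : k ≤ S.ncard)
    (e₀ : α) :
    ∃ f : ℕ → α, (∀ t, t < k → f t ∈ S) ∧ (∀ t t', t < k → t' < k → f t = f t' → t = t') := by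
  classical
  have hfin : S.Finite := Set.toFinite S
  obtain ⟨F, hF1, hF2⟩ := Finset.exists_subset_card_eq (show k ≤ hfin.toFinset.card by
    rwa [Set.ncard_eq_toFinset_card S hfin] at h)
  have hFS : ∀ e ∈ F, e ∈ S := fun e he => hfin.mem_toFinset.mp (hF1 he)
  let eqv := F.equivFinOfCardEq hF2
  refine ⟨fun t => if h : t < k then (eqv.symm ⟨t, h⟩ : α) else e₀, ?_, ?_⟩
  · intro t ht
    simp only [dif_pos ht]
    exact hFS _ (eqv.symm ⟨t, ht⟩).2
  · intro t t' ht ht' hf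
    simp only [dif_pos ht, dif_pos ht'] at hf
    have h2 := eqv.symm.injective (Subtype.ext hf)
    simpa using congrArg Fin.val h2

lemma blockStart (k c : ℕ) (hk : 2 ≤ k) :
    ∃ s : ℕ → ℕ, (∀ a b, a < b → s a + (k-1) ≤ s b) ∧ (∀ a, a < k → s a + (k-2) < k^2) ∧
      (∀ a, a < k → s a + (k-2) < c ∨ c ≤ s a) := by
  obtain ⟨K, rfl⟩ : ∃ K, k = K + 2 := ⟨k - 2, by omega⟩
  obtain ⟨q, r, hqm, hr⟩ : ∃ q r, (K+1) * q + r = c ∧ r ≤ K :=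
    ⟨c / (K+1), c % (K+1), Nat.div_add_mod c (K+1),
      by have := Nat.mod_lt c (show 0 < K+1 by omega); omega⟩
  have hstep : ∀ a, (if a < q then a * (K+1) else c + (a - q) * (K+1)) + (K+1) ≤
      (if a + 1 < q then (a+1) * (K+1) else c + (a + 1 - q) * (K+1)) := by
    intro a
    have e0 : (a+1) * (K+1) = a * (K+1) + (K+1) := by rw [Nat.succ_mul]
    by_cases h1 : a + 1 < q
    · rw [if_pos (by omega), if_pos h1]; omega
    · by_cases h2 : a < q
      · rw [if_pos h2, if_neg h1]
        have e3 : (a + 1 - q) * (K+1) = 0 := by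
          rw [show a + 1 - q = 0 by omega]; ring
        have e2 : q * (K+1) = (K+1) * q := Nat.mul_comm _ _
        have e4 : q * (K+1) = (a+1) * (K+1) := by rw [show q = a + 1 by omega]
        omega
      · rw [if_neg h2, if_neg h1]
        have e1 : (a + 1 - q) * (K+1) = (a - q) * (K+1) + (K+1) := by
          rw [show a + 1 - q = (a - q) + 1 by omega, Nat.succ_mul]
        omega
  have hsle : ∀ a, (if a < q then a * (K+1) else c + (a - q) * (K+1))
      ≤ a * (K+1) + r := by
    intro a
    split
    · omega
    · have e1 : (K+1) * q + (K+1) * (a - q) = (K+1) * a := by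
        rw [← Nat.mul_add]; congr 1; omega
      have e2 : (a - q) * (K+1) = (K+1) * (a - q) := Nat.mul_comm _ _
      have e3 : a * (K+1) = (K+1) * a := Nat.mul_comm _ _
      omega
  refine ⟨fun a => if a < q then a * (K+1) else c + (a - q) * (K+1), ?_, ?_, ?_⟩
  · intro a b hab
    simp only []
    induction b with
    | zero => omega
    | succ b ih =>
      rcases Nat.lt_or_ge a b with h' | h'
      · have := hstep b; have := ih h'; omega
      · have hab' : a = b := by omega
        subst hab'
        have := hstep a; omega
  · intro a ha
    simp only []
    have h1 := hsle a
    have h2 : a * (K+1) ≤ (K+1) * (K+1) := Nat.mul_le_mul_right _ (by omega)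
    have h4 : (K+2)^2 = (K+1)*(K+1) + 2*K + 3 := by ring
    omega
  · intro a ha
    simp only []
    by_cases h : a < q
    · left
      rw [if_pos h]
      have h5 : (a+1) * (K+1) ≤ q * (K+1) := Nat.mul_le_mul_right _ (by omega)
      have e0 : (a+1) * (K+1) = a * (K+1) + (K+1) := by rw [Nat.succ_mul]
      have e2 : q * (K+1) = (K+1) * q := Nat.mul_comm _ _
      omega
    · right
      rw [if_neg h]
      omega

/-- a path with `k` parallel edges between consecutive vertices plus a
vertex with `k²` neighbors on the path yields a strong immersion of `K_k`. -/
theorem strong_clique_immersion_of_path_plus_vertex (G : Multigraph) (n k : ℕ)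
    (x : Fin n → G.V) (hinj : Function.Injective x) (y : G.V)
    (hpar : ∀ i j : Fin n, (j : ℕ) = (i : ℕ) + 1 →
      k ≤ ({e | G.ends e = s(x i, x j)} : Set G.E).ncard)
    (hnbrs : k ^ 2 ≤ ({i : Fin n | G.Adj y (x i)} : Set (Fin n)).ncard) :
    StrongImmersion (cliqueGraph k) G := by
  classical
  rcases Nat.lt_or_ge k 2 with hk | hk
  · -- degenerate cases k = 0, 1
    interval_cases k
    · have hE : ∀ f : (cliqueGraph 0).E, False := by
        rintro ⟨z, hz⟩
        induction z using Sym2.inductionOn with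
        | hf u v => exact u.elim0
      exact ⟨⟨fun (v : Fin 0) => v.elim0, fun (v : Fin 0) => v.elim0,
        fun f => (hE f).elim, fun f => (hE f).elim, fun f => (hE f).elim,
        fun f => (hE f).elim, fun f => (hE f).elim⟩, fun f => (hE f).elim⟩
    · have hE : ∀ f : (cliqueGraph 1).E, False := by
        rintro ⟨z, hz⟩
        induction z using Sym2.inductionOn with
        | hf u v => exact hz (by rw [Sym2.mk_isDiag_iff]; exact Subsingleton.elim u v)
      exact ⟨⟨fun _ => y, fun (a b : Fin 1) _ => Subsingleton.elim a b,
        fun f => (hE f).elim, fun f => (hE f).elim, fun f => (hE f).elim,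
        fun f => (hE f).elim, fun f => (hE f).elim⟩, fun f => (hE f).elim⟩
  · -- main case
    have hnk : k^2 ≤ n := by
      have h1 := Set.ncard_le_ncard (Set.subset_univ {i : Fin n | G.Adj y (x i)})
        Set.finite_univ
      rw [Set.ncard_univ, Nat.card_eq_fintype_card, Fintype.card_fin] at h1
      omega
    have hn0 : 0 < n := by nlinarith
    set X : ℕ → G.V := fun m => x ⟨m % n, Nat.mod_lt m hn0⟩ with hXdef
    have hXeq : ∀ (m : ℕ) (hm : m < n), X m = x ⟨m, hm⟩ := fun m hm => by
      simp only [hXdef]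
      exact congrArg x (Fin.ext (Nat.mod_eq_of_lt hm))
    have hXinj : ∀ m m', m < n → m' < n → X m = X m' → m = m' := by
      intro m m' hm hm' h
      rw [hXeq m hm, hXeq m' hm'] at h
      simpa using congrArg Fin.val (hinj h)
    -- an arbitrary edge
    obtain ⟨e₀⟩ : Nonempty G.E := by
      have h1 := hpar ⟨0, by omega⟩ ⟨1, by nlinarith⟩ rfl
      have h2 : ({e | G.ends e = s(x ⟨0, by omega⟩, x ⟨1, by nlinarith⟩)} : Set G.E).Nonempty := by
        rw [← Set.ncard_pos (Set.toFinite _)]; omega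
      exact ⟨h2.choose⟩
    -- the selected neighbours, in increasing order
    obtain ⟨T, hTsub, hTcard⟩ : ∃ F : Finset (Fin n),
        ↑F ⊆ {i : Fin n | G.Adj y (x i)} ∧ F.card = k^2 := by
      have hfin : ({i : Fin n | G.Adj y (x i)} : Set (Fin n)).Finite := Set.toFinite _
      obtain ⟨F, hF1, hF2⟩ := Finset.exists_subset_card_eq
        (show k^2 ≤ hfin.toFinset.card by rwa [Set.ncard_eq_toFinset_card _ hfin] at hnbrs)
      exact ⟨F, fun e he => hfin.mem_toFinset.mp (hF1 he), hF2⟩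
    set σ : Fin (k^2) ↪o Fin n := T.orderEmbOfFin hTcard with hσdef
    have hσadj : ∀ i : Fin (k^2), G.Adj y (x (σ i)) := fun i =>
      hTsub (T.orderEmbOfFin_mem hTcard i)
    have hσy : ∀ i : Fin (k^2), x (σ i) ≠ y := by
      intro i h
      obtain ⟨e, he⟩ := hσadj i
      apply G.no_loops e
      rw [he, h, Sym2.mk_isDiag_iff]
    have hσmono : ∀ i j : Fin (k^2), (i:ℕ) < (j:ℕ) → ((σ i : Fin n):ℕ) < ((σ j : Fin n):ℕ) :=
      fun i j h => Fin.lt_def.mp (σ.strictMono (Fin.lt_def.mpr h))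
    -- the cut value c
    obtain ⟨c, hcprop⟩ : ∃ c : ℕ, ∀ (i : Fin (k^2)) (m : Fin n), x m = y →
        (((i:ℕ) < c → ((σ i : Fin n):ℕ) < (m:ℕ)) ∧ (c ≤ (i:ℕ) → (m:ℕ) < ((σ i : Fin n):ℕ))) := by
      by_cases hy : ∃ m : Fin n, x m = y
      · obtain ⟨m₀, hm₀⟩ := hy
        refine ⟨(Finset.univ.filter (fun i : Fin (k^2) => σ i < m₀)).card, ?_⟩
        have key : ∀ i : Fin (k^2), (σ i : Fin n) < m₀ ↔
            (i:ℕ) < (Finset.univ.filter (fun i : Fin (k^2) => σ i < m₀)).card := by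
          intro i
          constructor
          · intro hi
            have hsub : Finset.univ.filter (fun j : Fin (k^2) => j ≤ i) ⊆
                Finset.univ.filter (fun i : Fin (k^2) => σ i < m₀) := by
              intro j hj
              simp only [Finset.mem_filter, Finset.mem_univ, true_and] at hj ⊢
              exact lt_of_le_of_lt (σ.monotone hj) hi
            have hcard : (Finset.univ.filter (fun j : Fin (k^2) => j ≤ i)).card
                = (i:ℕ) + 1 := by
              have he : Finset.univ.filter (fun j : Fin (k^2) => j ≤ i) = Finset.Iic i := by
                ext j; simp
              rw [he, Fin.card_Iic]
            have := Finset.card_le_card hsub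
            omega
          · intro hi
            by_contra hge
            push_neg at hge
            have hsub : Finset.univ.filter (fun i : Fin (k^2) => σ i < m₀) ⊆
                Finset.univ.filter (fun j : Fin (k^2) => j < i) := by
              intro j hj
              simp only [Finset.mem_filter, Finset.mem_univ, true_and] at hj ⊢
              exact σ.strictMono.lt_iff_lt.mp (lt_of_lt_of_le hj hge)
            have hcard : (Finset.univ.filter (fun j : Fin (k^2) => j < i)).card = (i:ℕ) := by
              have he : Finset.univ.filter (fun j : Fin (k^2) => j < i) = Finset.Iio i := by
                ext j; simp
              rw [he, Fin.card_Iio]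
            have := Finset.card_le_card hsub
            omega
        intro i m hm
        have hmm : m = m₀ := hinj (hm.trans hm₀.symm)
        subst hmm
        constructor
        · intro hi
          exact Fin.lt_def.mp ((key i).mpr hi)
        · intro hi
          have h1 : ¬ ((σ i : Fin n) < m) := fun h => by have := (key i).mp h; omega
          have h2 : (σ i : Fin n) ≠ m := fun h => hσy i (by rw [h, hm])
          rw [Fin.lt_def] at h1
          have := Fin.val_ne_of_ne h2
          omega
      · exact ⟨k^2, fun i m hm => absurd ⟨m, hm⟩ hy⟩
    -- block starts
    obtain ⟨s, hsmono, hs1, hs3⟩ := blockStart k c hk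
    -- block positions
    set B : ℕ → ℕ → ℕ := fun a cc =>
      if h : s a + cc < k^2 then ((σ ⟨s a + cc, h⟩ : Fin n) : ℕ) else 0 with hBdef
    have hBval : ∀ a cc (h : s a + cc < k^2), B a cc = ((σ ⟨s a + cc, h⟩ : Fin n) : ℕ) := by
      intro a cc h
      simp only [hBdef, dif_pos h]
    have hBlt : ∀ a cc, a < k → cc ≤ k-2 → s a + cc < k^2 := by
      intro a cc ha hcc
      have := hs1 a ha
      omega
    have hBn : ∀ a cc, a < k → cc ≤ k-2 → B a cc < n := by
      intro a cc ha hcc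
      rw [hBval a cc (hBlt a cc ha hcc)]
      exact (σ _).isLt
    have hB1 : ∀ a cc cc', a < k → cc < cc' → cc' ≤ k-2 → B a cc < B a cc' := by
      intro a cc cc' ha hcc hcc'
      rw [hBval a cc (hBlt a cc ha (by omega)), hBval a cc' (hBlt a cc' ha hcc')]
      exact hσmono _ _ (by simp; omega)
    have hB2 : ∀ a a', a < a' → a' < k → B a (k-2) < B a' 0 := by
      intro a a' haa ha'
      rw [hBval a (k-2) (hBlt a (k-2) (by omega) le_rfl),
        hBval a' 0 (hBlt a' 0 ha' (by omega))]
      have := hsmono a a' haa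
      exact hσmono _ _ (by simp; omega)
    have havoid : ∀ a, a < k → ∀ m, m < n → X m = y → m < B a 0 ∨ B a (k-2) < m := by
      intro a ha m hm hXm
      rw [hXeq m hm] at hXm
      rcases hs3 a ha with h | h
      · right
        rw [hBval a (k-2) (hBlt a (k-2) ha le_rfl)]
        have := (hcprop ⟨s a + (k-2), hBlt a (k-2) ha le_rfl⟩ ⟨m, hm⟩ hXm).1 (by simpa using by omega)
        simpa using this
      · left
        rw [hBval a 0 (hBlt a 0 ha (by omega))]
        have := (hcprop ⟨s a + 0, hBlt a 0 ha (by omega)⟩ ⟨m, hm⟩ hXm).2 (by simpa using by omega)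
        simpa using this
    -- parallel edges
    have hpech : ∀ p : ℕ, ∃ f : ℕ → G.E, p + 1 < n →
        ((∀ t, t < k → G.ends (f t) = s(X p, X (p+1))) ∧
          (∀ t t', t < k → t' < k → f t = f t' → t = t')) := by
      intro p
      by_cases hp : p + 1 < n
      · obtain ⟨f, hf1, hf2⟩ := exists_inj_of_ncard
          {e | G.ends e = s(x ⟨p, by omega⟩, x ⟨p+1, hp⟩)} k
          (hpar ⟨p, by omega⟩ ⟨p+1, hp⟩ rfl) e₀
        refine ⟨f, fun _ => ⟨fun t ht => ?_, hf2⟩⟩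
        have hmem := hf1 t ht
        rw [hXeq p (by omega), hXeq (p+1) hp]
        exact hmem
      · exact ⟨fun _ => e₀, fun h => absurd h hp⟩
    choose pe hpe using hpech
    -- edges to y
    have hyech : ∀ a cc : ℕ, ∃ e : G.E, a < k → cc ≤ k-2 →
        G.ends e = s(y, X (B a cc)) := by
      intro a cc
      by_cases h : a < k ∧ cc ≤ k-2
      · have hlt : s a + cc < k^2 := hBlt a cc h.1 h.2
        obtain ⟨e, he⟩ := hσadj ⟨s a + cc, hlt⟩
        refine ⟨e, fun _ _ => ?_⟩
        have hXB : X (B a cc) = x (σ ⟨s a + cc, hlt⟩) := by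
          rw [hBval a cc hlt, hXeq _ (σ _).isLt]
        rw [hXB]
        exact he
      · exact ⟨e₀, fun h1 h2 => absurd ⟨h1, h2⟩ h⟩
    choose ye hye using hyech
    exact core_immersion G k n hk X y hXinj B hBn hB1 hB2 havoid pe
      (fun p hp t ht => (hpe p hp).1 t ht)
      (fun p hp t t' ht ht' => (hpe p hp).2 t t' ht ht')
      ye (fun a cc ha hcc => hye a cc ha hcc)
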